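/- arXiv:2309.16712 — 3 statements merged into one kernel-verified Lean document; each statement's English description precedes it below -/
import Mathlib

section
/- Given data sizes d_1 \ge d_2 \ge ... \ge d_{J'} \ge 0 for participating types 1,...,J' and a common network cost c \ge 0, the rewards defined by r_{J'} = \theta_{J'} d_{J'} + c and r_j = \theta_j d_j + \sum_{k=j+1}^{J'} (\theta_k - \theta_{k-1}) d_k + c for j < J' satisfy all IC and IR constraints among participating types, and they minimize the total reward \sum_j I_j r_j among all reward vectors satisfying IC and IR for the given data sizes (where I_j > 0 is the number of type-j users). -/
/-- The rewards r_{J'} = θ_{J'} d_{J'} + c and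
r_j = θ_j d_j + Σ_{k>j} (θ_k - θ_{k-1}) d_k + c satisfy all IC and IR
constraints and minimize the total reward among all reward vectors
satisfying IC and IR for the given data sizes. (Types are indexed 0,…,J-1.) -/
theorem stmt6 (J : ℕ) (hJ : 0 < J) (θ d : ℕ → ℝ) (I : ℕ → ℝ) (c : ℝ)
    (hθpos : ∀ j, j < J → 0 < θ j)
    (hθ : ∀ j k, j < k → k < J → θ j < θ k)
    (hd0 : ∀ j, j < J → 0 ≤ d j)
    (hdmono : ∀ j k, j ≤ k → k < J → d k ≤ d j)
    (hc : 0 ≤ c) (hI : ∀ j, j < J → 0 < I j)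
    (r : ℕ → ℝ)
    (hr : ∀ j, j < J →
      r j = θ j * d j + (∑ k ∈ Finset.Ico (j + 1) J, (θ k - θ (k - 1)) * d k) + c) :
    (∀ j k, j < J → k < J → r k - θ j * d k ≤ r j - θ j * d j)
    ∧ (∀ j, j < J → 0 ≤ r j - θ j * d j - c)
    ∧ (∀ r' : ℕ → ℝ,
        (∀ j k, j < J → k < J → r' k - θ j * d k ≤ r' j - θ j * d j) →
        (∀ j, j < J → 0 ≤ r' j - θ j * d j - c) →
        ∑ j ∈ Finset.range J, I j * r j ≤ ∑ j ∈ Finset.range J, I j * r' j) := by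
  have hθle : ∀ a b, a ≤ b → b < J → θ a ≤ θ b := by
    intro a b hab hb
    rcases eq_or_lt_of_le hab with h | h
    · rw [h]
    · exact (hθ a b h hb).le
  -- key telescoping bound
  have key : ∀ a b, a ≤ b → b < J →
      (θ b - θ a) * d b ≤ (∑ m ∈ Finset.Ico (a+1) (b+1), (θ m - θ (m-1)) * d m) ∧
      (∑ m ∈ Finset.Ico (a+1) (b+1), (θ m - θ (m-1)) * d m) ≤ (θ b - θ a) * d a := by
    intro a b hab hb
    induction b, hab using Nat.le_induction with
    | base => simp
    | succ b hab ih =>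
      have hbJ : b < J := Nat.lt_of_succ_lt hb
      obtain ⟨ih1, ih2⟩ := ih hbJ
      rw [Finset.sum_Ico_succ_top (by omega : a + 1 ≤ b + 1)]
      simp only [Nat.add_sub_cancel]
      have h1 : θ a ≤ θ b := hθle a b hab hbJ
      have h2 : θ b ≤ θ (b+1) := hθle b (b+1) (by omega) hb
      have h3 : d (b+1) ≤ d b := hdmono b (b+1) (by omega) hb
      have h4 : d (b+1) ≤ d a := hdmono a (b+1) (by omega) hb
      have h5 : 0 ≤ d (b+1) := hd0 (b+1) hb
      constructor
      · nlinarith [mul_nonneg (sub_nonneg.2 h1) (sub_nonneg.2 h3)]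
      · nlinarith [mul_nonneg (sub_nonneg.2 h2) (sub_nonneg.2 h4)]
  have IC : ∀ j k, j < J → k < J → r k - θ j * d k ≤ r j - θ j * d j := by
    intro j k hj hk
    rw [hr j hj, hr k hk]
    rcases le_total j k with h | h
    · have hsplit : ∑ m ∈ Finset.Ico (j+1) J, (θ m - θ (m-1)) * d m
          = (∑ m ∈ Finset.Ico (j+1) (k+1), (θ m - θ (m-1)) * d m)
            + ∑ m ∈ Finset.Ico (k+1) J, (θ m - θ (m-1)) * d m :=
        (Finset.sum_Ico_consecutive _ (by omega) (by omega)).symm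
      have := (key j k h hk).1
      rw [hsplit]; linarith
    · have hsplit : ∑ m ∈ Finset.Ico (k+1) J, (θ m - θ (m-1)) * d m
          = (∑ m ∈ Finset.Ico (k+1) (j+1), (θ m - θ (m-1)) * d m)
            + ∑ m ∈ Finset.Ico (j+1) J, (θ m - θ (m-1)) * d m :=
        (Finset.sum_Ico_consecutive _ (by omega) (by omega)).symm
      have := (key k j h hj).2
      rw [hsplit]; linarith
  have IR : ∀ j, j < J → 0 ≤ r j - θ j * d j - c := by
    intro j hj
    rw [hr j hj]
    have : 0 ≤ ∑ k ∈ Finset.Ico (j+1) J, (θ k - θ (k-1)) * d k := by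
      apply Finset.sum_nonneg
      intro k hk
      rw [Finset.mem_Ico] at hk
      have hk1 : k - 1 ≤ k := Nat.sub_le _ _
      exact mul_nonneg (sub_nonneg.2 (hθle (k-1) k hk1 hk.2)) (hd0 k hk.2)
    linarith
  refine ⟨IC, IR, ?_⟩
  intro r' hIC' hIR'
  -- show r j ≤ r' j for all j < J, by downward induction
  have hle : ∀ n j, j < J → J = j + 1 + n → r j ≤ r' j := by
    intro n
    induction n with
    | zero =>
      intro j hj hJj
      have : Finset.Ico (j+1) J = ∅ := by rw [Finset.Ico_eq_empty_iff]; omega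
      have hrj : r j = θ j * d j + c := by rw [hr j hj, this]; simp
      have := hIR' j hj
      linarith
    | succ n ih =>
      intro j hj hJj
      have hj1 : j + 1 < J := by omega
      have hih : r (j+1) ≤ r' (j+1) := ih (j+1) hj1 (by omega)
      have hstep : r j = r (j+1) + θ j * d j - θ j * d (j+1) := by
        rw [hr j hj, hr (j+1) hj1]
        rw [Finset.sum_eq_sum_Ico_succ_bot (by omega : j + 1 < J)]
        simp only [Nat.add_sub_cancel]
        ring
      have := hIC' j (j+1) hj hj1
      linarith
  apply Finset.sum_le_sum
  intro j hj
  rw [Finset.mem_range] at hj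
  have := hle (J - 1 - j) j hj (by omega)
  exact mul_le_mul_of_nonneg_left this (hI j hj).le
end

section
/- Under the optimal demand formula n^*(h) = [\sqrt{(\beta h - \gamma)^2 - 3\beta\lambda} - (2\beta h + \gamma)] / (3\beta) with fixed \lambda \le -h(\beta h + 2\gamma) for all considered h, both n^*(h) and the total usage n^*(h) + h are such that n^*(h) is strictly decreasing in h while the total usage n^*(h) + h = [\sqrt{(\beta h - \gamma)^2 - 3\beta\lambda} + (\beta h - \gamma)]/(3\beta) is strictly increasing in h. In particular, slots with smaller background demand attract more federated-learning users yet still have smaller total network demand. -/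
/-- Under the optimal demand formula, n*(h) is strictly decreasing in h
while the total usage n*(h) + h is strictly increasing in h, on the domain
where λ + h(βh + 2γ) ≤ 0 (ensuring n*(h) ≥ 0). -/
theorem stmt15 (β γ lam : ℝ) (hβ : 0 < β) (hγ : 0 < γ) (hlam : lam < 0) :
    let nstar : ℝ → ℝ := fun h =>
      (Real.sqrt ((β * h - γ) ^ 2 - 3 * β * lam) - (2 * β * h + γ)) / (3 * β)
    ∀ h1 h2 : ℝ, 0 ≤ h1 → 0 ≤ h2 →
      lam + h1 * (β * h1 + 2 * γ) ≤ 0 → lam + h2 * (β * h2 + 2 * γ) ≤ 0 →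
      h1 < h2 → nstar h2 < nstar h1 ∧ nstar h1 + h1 < nstar h2 + h2 := by
  intro nstar h1 h2 _ _ _ _ hlt
  have hD1 : 0 < (β * h1 - γ) ^ 2 - 3 * β * lam := by nlinarith [sq_nonneg (β * h1 - γ)]
  have hD2 : 0 < (β * h2 - γ) ^ 2 - 3 * β * lam := by nlinarith [sq_nonneg (β * h2 - γ)]
  set s1 := Real.sqrt ((β * h1 - γ) ^ 2 - 3 * β * lam) with hs1
  set s2 := Real.sqrt ((β * h2 - γ) ^ 2 - 3 * β * lam) with hs2
  have hs1sq : s1 ^ 2 = (β * h1 - γ) ^ 2 - 3 * β * lam := Real.sq_sqrt hD1.le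
  have hs2sq : s2 ^ 2 = (β * h2 - γ) ^ 2 - 3 * β * lam := Real.sq_sqrt hD2.le
  have hs1pos : 0 < s1 := Real.sqrt_pos.mpr hD1
  have hs2pos : 0 < s2 := Real.sqrt_pos.mpr hD2
  have h3β : (0:ℝ) < 3 * β := by linarith
  have habs1 : β * h1 - γ < s1 := by
    by_contra hc
    push_neg at hc
    nlinarith [hs1sq, hs1pos, mul_pos hβ (neg_pos.mpr hlam)]
  have hmabs1 : -(β * h1 - γ) < s1 := by
    by_contra hc
    push_neg at hc
    nlinarith [hs1sq, hs1pos, mul_pos hβ (neg_pos.mpr hlam)]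
  have hΔ : 0 < h2 - h1 := sub_pos.mpr hlt
  -- key inequality 1: s2 < s1 + 2β(h2-h1)
  have key1 : s2 < s1 + 2 * β * (h2 - h1) := by
    have hrhs : 0 < s1 + 2 * β * (h2 - h1) := by positivity
    rw [hs2, show s1 + 2 * β * (h2 - h1) = s1 + 2 * β * (h2 - h1) from rfl]
    rw [Real.sqrt_lt' hrhs]
    nlinarith [hs1sq, hs1pos, habs1, mul_pos hβ hΔ,
      mul_pos (mul_pos hβ hΔ) hs1pos, sq_nonneg (β * (h2 - h1)),
      mul_lt_mul_of_pos_left habs1 (mul_pos hβ hΔ)]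
  -- key inequality 2: s1 - β(h2-h1) < s2
  have key2 : s1 - β * (h2 - h1) < s2 := by
    rcases le_or_gt (s1 - β * (h2 - h1)) 0 with h0 | h0
    · linarith
    · rw [hs2, show s1 - β * (h2 - h1) = s1 - β * (h2 - h1) from rfl]
      rw [Real.lt_sqrt h0.le]
      nlinarith [hs1sq, hs1pos, hmabs1, mul_pos hβ hΔ,
        mul_pos (mul_pos hβ hΔ) hs1pos, sq_nonneg (β * (h2 - h1)),
        mul_lt_mul_of_pos_left hmabs1 (mul_pos hβ hΔ)]
  constructor
  · show (s2 - (2 * β * h2 + γ)) / (3 * β) < (s1 - (2 * β * h1 + γ)) / (3 * β)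
    apply div_lt_div_of_pos_right ?_ h3β
    linarith
  · show (s1 - (2 * β * h1 + γ)) / (3 * β) + h1 < (s2 - (2 * β * h2 + γ)) / (3 * β) + h2
    rw [div_add' _ _ _ h3β.ne', div_add' _ _ _ h3β.ne']
    apply div_lt_div_of_pos_right ?_ h3β
    nlinarith [key2]
end

section
/- In the two-type contract problem (J = 2) with interior optimum, the server's optimal data size for type 2 is d_2^* = [I_2^{1/3} (2\xi)^{2/3} ((I_1+I_2)\theta_2 - I_1\theta_1)^{2/3}]^{-1} - I_1 d^{max} / I_2, provided this value lies in [0, d^{max}]: it is the unique stationary point of the server's cost \frac{1}{\sqrt{I_1 d^{max} + I_2 d_2}} + \xi [I_1(\theta_1 d^{max} + (\theta_2-\theta_1) d_2) + I_2 \theta_2 d_2 + (I_1+I_2) c] as a function of d_2, and this cost function is strictly convex in d_2 on (−I_1 d^{max}/I_2, \infty). -/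
/-- Two-type contract problem: the server's cost W(d₂) is strictly convex on
(-I₁dᵐᵃˣ/I₂, ∞), and d₂* = [I₂^{1/3}(2ξ)^{2/3}((I₁+I₂)θ₂ - I₁θ₁)^{2/3}]⁻¹
  - I₁dᵐᵃˣ/I₂ is its unique stationary point, provided d₂* ∈ [0, dᵐᵃˣ]. -/
theorem stmt17 (θ1 θ2 I1 I2 ξ dmax c : ℝ)
    (hθ1 : 0 < θ1) (hθ12 : θ1 < θ2) (hI1 : 0 < I1) (hI2 : 0 < I2)
    (hξ : 0 < ξ) (hdmax : 0 < dmax) (hc : 0 ≤ c) :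
    let W : ℝ → ℝ := fun d2 =>
      1 / Real.sqrt (I1 * dmax + I2 * d2)
        + ξ * (I1 * θ1 * dmax + I1 * (θ2 - θ1) * d2 + I2 * θ2 * d2 + (I1 + I2) * c)
    let dstar : ℝ :=
      1 / (I2 ^ ((1 : ℝ) / 3) * (2 * ξ) ^ ((2 : ℝ) / 3)
            * ((I1 + I2) * θ2 - I1 * θ1) ^ ((2 : ℝ) / 3))
        - I1 * dmax / I2
    0 ≤ dstar → dstar ≤ dmax →
      StrictConvexOn ℝ (Set.Ioi (-(I1 * dmax) / I2)) W
      ∧ deriv W dstar = 0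
      ∧ ∀ x ∈ Set.Ioi (-(I1 * dmax) / I2), deriv W x = 0 → x = dstar := by
  intro W dstar _ _
  set a : ℝ := I1 * dmax with ha
  set b : ℝ := I2 with hb
  set A : ℝ := I1 * (θ2 - θ1) + I2 * θ2 with hAdef
  have hbpos : (0:ℝ) < b := hI2
  have hApos : (0:ℝ) < A := by
    have h1 : 0 < θ2 - θ1 := by linarith
    have := mul_pos hI1 h1
    have := mul_pos hI2 (lt_trans hθ1 hθ12)
    rw [hAdef]; linarith
  have hapos : (0:ℝ) < a := by rw [ha]; exact mul_pos hI1 hdmax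
  have hmem : ∀ x : ℝ, x ∈ Set.Ioi (-(I1 * dmax) / I2) ↔ 0 < a + b * x := by
    intro x
    rw [Set.mem_Ioi, div_lt_iff₀ hbpos]
    constructor <;> intro h <;> nlinarith
  have hAeq : (I1 + I2) * θ2 - I1 * θ1 = A := by rw [hAdef]; ring
  have h2ξA : (0:ℝ) < 2 * ξ * A := by positivity
  have hu : a + b * dstar = (b / (2 * ξ * A)) ^ ((2:ℝ)/3) := by
    set Z : ℝ := (2 * ξ * A) ^ ((2:ℝ)/3) with hZ
    have hZpos : (0:ℝ) < Z := Real.rpow_pos_of_pos h2ξA _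
    have hb13 : (0:ℝ) < b ^ ((1:ℝ)/3) := Real.rpow_pos_of_pos hbpos _
    have hb23 : (0:ℝ) < b ^ ((2:ℝ)/3) := Real.rpow_pos_of_pos hbpos _
    have hsplit : b ^ ((1:ℝ)/3) * b ^ ((2:ℝ)/3) = b := by
      rw [← Real.rpow_add hbpos]; norm_num
    have hmul : (2*ξ) ^ ((2:ℝ)/3) * A ^ ((2:ℝ)/3) = Z := by
      rw [hZ, Real.mul_rpow (by positivity) hApos.le]
    have hdivrw : (b / (2*ξ*A)) ^ ((2:ℝ)/3) = b ^ ((2:ℝ)/3) / Z := by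
      rw [Real.div_rpow hbpos.le h2ξA.le, hZ]
    have hbY : b / (b ^ ((1:ℝ)/3) * Z) = b ^ ((2:ℝ)/3) / Z := by
      rw [div_eq_div_iff (by positivity) hZpos.ne']
      linear_combination (-Z) * hsplit
    show a + b * (1 / (b ^ ((1:ℝ)/3) * (2*ξ) ^ ((2:ℝ)/3)
        * ((I1 + I2) * θ2 - I1 * θ1) ^ ((2:ℝ)/3)) - a / b) = _
    rw [hAeq, hdivrw, mul_assoc, hmul, mul_sub, mul_one_div]
    have hba : b * (a / b) = a := by field_simp
    rw [hba, hbY]; ring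
  have hupos : (0:ℝ) < a + b * dstar := by
    rw [hu]; exact Real.rpow_pos_of_pos (by positivity) _
  have huval : (a + b * dstar) ^ (-(3:ℝ)/2) = 2 * ξ * A / b := by
    rw [hu, ← Real.rpow_mul (by positivity : (0:ℝ) ≤ b / (2*ξ*A))]
    norm_num [Real.rpow_neg_one, inv_div]
  have hopen : IsOpen {y : ℝ | 0 < a + b * y} :=
    isOpen_lt continuous_const (continuous_const.add (continuous_const.mul continuous_id))
  have hderiv : ∀ x : ℝ, 0 < a + b * x →
      HasDerivAt W (ξ * A - b / 2 * (a + b * x) ^ (-(3:ℝ)/2)) x := by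
    intro x hx
    have haff : HasDerivAt (fun y : ℝ => a + b * y) b x := by
      simpa using ((hasDerivAt_id x).const_mul b).const_add a
    have hpow : HasDerivAt (fun y : ℝ => (a + b * y) ^ (-(1:ℝ)/2))
        (b * (-(1:ℝ)/2) * (a + b * x) ^ ((-(1:ℝ)/2) - 1)) x :=
      haff.rpow_const (Or.inl hx.ne')
    set K : ℝ := ξ * (I1 * θ1 * dmax + (I1 + I2) * c) with hK
    have hlin : HasDerivAt (fun y : ℝ => ξ * A * y + K) (ξ * A * 1) x :=
      ((hasDerivAt_id x).const_mul (ξ * A)).add_const K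
    have h5 : ξ * A - b / 2 * (a + b * x) ^ (-(3:ℝ)/2)
        = b * (-(1:ℝ)/2) * (a + b * x) ^ ((-(1:ℝ)/2) - 1) + ξ * A * 1 := by
      rw [show ((-(1:ℝ)/2) - 1) = -(3:ℝ)/2 by norm_num]; ring
    have hg : HasDerivAt (fun y : ℝ => (a + b * y) ^ (-(1:ℝ)/2) + (ξ * A * y + K))
        (ξ * A - b / 2 * (a + b * x) ^ (-(3:ℝ)/2)) x := by
      rw [h5]; exact hpow.add hlin
    refine hg.congr_of_eventuallyEq ?_
    filter_upwards [hopen.mem_nhds hx] with y hy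
    have hy' : (0:ℝ) < a + b * y := hy
    show 1 / Real.sqrt (a + b * y) + _ = _
    have hsq : 1 / Real.sqrt (a + b * y) = (a + b * y) ^ (-(1:ℝ)/2) := by
      rw [Real.sqrt_eq_rpow, one_div, ← Real.rpow_neg hy'.le]
      norm_num
    rw [hsq, hK, hAdef]; ring
  have hstat : deriv W dstar = 0 := by
    rw [(hderiv dstar hupos).deriv, huval]
    field_simp
    ring
  refine ⟨?_, hstat, ?_⟩
  · refine strictConvexOn_of_deriv2_pos (convex_Ioi _) ?_ ?_
    · have hsqrt : ContinuousOn (fun y : ℝ => 1 / Real.sqrt (a + b * y))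
          (Set.Ioi (-(I1 * dmax) / I2)) := by
        apply ContinuousOn.div continuousOn_const
        · exact (Real.continuous_sqrt.comp
            (continuous_const.add (continuous_const.mul continuous_id))).continuousOn
        · intro y hy
          exact (Real.sqrt_pos.mpr ((hmem y).mp hy)).ne'
      have hlc : Continuous (fun y : ℝ =>
          ξ * (I1 * θ1 * dmax + I1 * (θ2 - θ1) * y + I2 * θ2 * y + (I1 + I2) * c)) := by
        fun_prop
      exact hsqrt.add hlc.continuousOn
    · intro x hx
      rw [interior_Ioi] at hx
      have hx' : (0:ℝ) < a + b * x := (hmem x).mp hx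
      have heq : deriv W =ᶠ[nhds x]
          (fun y => ξ * A - b / 2 * (a + b * y) ^ (-(3:ℝ)/2)) := by
        filter_upwards [hopen.mem_nhds hx'] with y hy
        exact (hderiv y hy).deriv
      have haff : HasDerivAt (fun y : ℝ => a + b * y) b x := by
        simpa using ((hasDerivAt_id x).const_mul b).const_add a
      have hpow : HasDerivAt (fun y : ℝ => (a + b * y) ^ (-(3:ℝ)/2))
          (b * (-(3:ℝ)/2) * (a + b * x) ^ ((-(3:ℝ)/2) - 1)) x :=
        haff.rpow_const (Or.inl hx'.ne')
      have hg2 : HasDerivAt (fun y => ξ * A - b / 2 * (a + b * y) ^ (-(3:ℝ)/2))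
          (-(b / 2 * (b * (-(3:ℝ)/2) * (a + b * x) ^ ((-(3:ℝ)/2) - 1)))) x :=
        (hpow.const_mul (b / 2)).const_sub (ξ * A)
      have h2 : deriv (deriv W) x
          = -(b / 2 * (b * (-(3:ℝ)/2) * (a + b * x) ^ ((-(3:ℝ)/2) - 1))) := by
        rw [heq.deriv_eq]
        exact hg2.deriv
      show 0 < (deriv^[2] W) x
      have hit : deriv^[2] W = deriv (deriv W) := rfl
      rw [hit, h2]
      have hp : (0:ℝ) < (a + b * x) ^ ((-(3:ℝ)/2) - 1) :=
        Real.rpow_pos_of_pos hx' _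
      nlinarith [mul_pos (mul_pos hbpos hbpos) hp]
  · intro x hx hdx
    have hx' : (0:ℝ) < a + b * x := (hmem x).mp hx
    rw [(hderiv x hx').deriv] at hdx
    have hxval : (a + b * x) ^ (-(3:ℝ)/2) = 2 * ξ * A / b := by
      rw [show (2 * ξ * A / b) = ξ * A / (b / 2) by field_simp,
        eq_div_iff (by positivity : (b:ℝ)/2 ≠ 0)]
      linarith
    have hsame : a + b * x = a + b * dstar := by
      have h1 : ((a + b * x) ^ (-(3:ℝ)/2)) ^ (-(2:ℝ)/3) = a + b * x := by
        rw [← Real.rpow_mul hx'.le]; norm_num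
      have h2 : ((a + b * dstar) ^ (-(3:ℝ)/2)) ^ (-(2:ℝ)/3) = a + b * dstar := by
        rw [← Real.rpow_mul hupos.le]; norm_num
      rw [← h1, ← h2, hxval, huval]
    exact mul_left_cancel₀ hbpos.ne' (by linarith)
end
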